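/- Let X be an asymptotically transitive Banach space whose unit ball is dentable, i.e., inf over f ∈ S_{X*} and 0<α<1 of diam{x ∈ B_X : f(x) ≥ α} is 0. Then X is uniformly convex. -/
import Mathlib

private lemma stmt_13_aux1 (α η δ S t : ℝ) (hα0 : 0 < α) (hα1 : α < 1)
    (hδ : δ = (1 - α) / 16) (hkey : (1 + α) * (1 + η) = (3 + α) / 2)
    (hS : 2 * (1 - δ) * (1 - δ) ≤ S) (ht : t ≤ 1 + η) :
    α * (1 + η) ≤ S - t := by
  nlinarith [sq_nonneg (1 - α)]

private lemma stmt_13_aux2 (η ε a b : ℝ) (hη : 0 < η) (hη2 : η < 1 / 2) (hε : 0 < ε)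
    (h1 : b ≤ (1 + η) * a) (h2 : a < (1 + η) * (ε / 4)) (ha : 0 ≤ a) :
    b < ε := by
  nlinarith

theorem stmt_13 {X : Type*} [NormedAddCommGroup X] [NormedSpace ℝ X] [CompleteSpace X]
    (hAT : ∀ x y : X, ‖x‖ = 1 → ‖y‖ = 1 → ∀ ε > 0, ∃ T : X ≃L[ℝ] X,
      T x = y ∧ ‖(T : X →L[ℝ] X)‖ ≤ 1 + ε ∧ ‖(T.symm : X →L[ℝ] X)‖ ≤ 1 + ε)
    (hdent : ∀ ε > 0, ∃ f : X →L[ℝ] ℝ, ‖f‖ = 1 ∧ ∃ α : ℝ, 0 < α ∧ α < 1 ∧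
      Metric.diam {x : X | ‖x‖ ≤ 1 ∧ α ≤ f x} < ε) :
    ∀ ε > 0, ∃ δ > 0, ∀ x y : X, ‖x‖ ≤ 1 → ‖y‖ ≤ 1 → ε ≤ ‖x - y‖ →
      ‖x + y‖ / 2 ≤ 1 - δ := by
  intro ε hε
  obtain ⟨f, hf, α, hα0, hα1, hdiam⟩ := hdent (ε / 4) (by linarith)
  set δ : ℝ := (1 - α) / 16 with hδdef
  have hδ0 : 0 < δ := by rw [hδdef]; linarith
  have hδlt : δ < 1 / 16 := by rw [hδdef]; linarith
  refine ⟨δ, hδ0, ?_⟩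
  intro x y hx hy hxy
  by_contra hcon
  push_neg at hcon
  -- η parameter
  set η : ℝ := (1 - α) / (2 * (1 + α)) with hηdef
  have hη0 : 0 < η := by rw [hηdef]; exact div_pos (by linarith) (by linarith)
  have hηhalf : η < 1 / 2 := by
    rw [hηdef, div_lt_iff₀ (by linarith : (0:ℝ) < 2 * (1 + α))]
    nlinarith
  have h1η : (0:ℝ) < 1 + η := by linarith
  have hkey : (1 + α) * (1 + η) = (3 + α) / 2 := by
    rw [hηdef]; field_simp; ring
  -- x + y is nonzero
  have hs0 : 0 < ‖x + y‖ := by linarith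
  -- find a point of the slice with f value close to 1
  have h1δ : (1 : ℝ) - δ < ‖f‖ := by rw [hf]; linarith
  obtain ⟨u₀, hu₀, hfu₀⟩ := f.exists_lt_apply_of_lt_opNorm h1δ
  have hexu : ∃ u : X, ‖u‖ ≤ 1 ∧ 1 - δ < f u := by
    rcases le_or_gt 0 (f u₀) with h | h
    · exact ⟨u₀, hu₀.le, by rwa [Real.norm_eq_abs, abs_of_nonneg h] at hfu₀⟩
    · refine ⟨-u₀, by simpa using hu₀.le, ?_⟩
      rw [map_neg]
      rwa [Real.norm_eq_abs, abs_of_neg h] at hfu₀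
  obtain ⟨u, hu1, hfu⟩ := hexu
  have hfu_pos : 0 < f u := by linarith
  have hu0 : 0 < ‖u‖ := by
    rcases eq_or_ne u 0 with rfl | h
    · simp at hfu_pos
    · exact norm_pos_iff.mpr h
  set w : X := ‖u‖⁻¹ • u with hwdef
  have hw : ‖w‖ = 1 := by
    rw [hwdef, norm_smul, norm_inv, norm_norm, inv_mul_cancel₀ hu0.ne']
  have hinvu : (1:ℝ) ≤ ‖u‖⁻¹ := by
    nlinarith [mul_inv_cancel₀ hu0.ne', inv_nonneg.mpr (norm_nonneg u)]
  have hfw : 1 - δ ≤ f w := by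
    have hfww : f w = ‖u‖⁻¹ * f u := by rw [hwdef, map_smul, smul_eq_mul]
    nlinarith
  set z : X := ‖x + y‖⁻¹ • (x + y) with hzdef
  have hz : ‖z‖ = 1 := by
    rw [hzdef, norm_smul, norm_inv, norm_norm, inv_mul_cancel₀ hs0.ne']
  obtain ⟨T, hTz, hT, hTs⟩ := hAT z w hz hw η hη0
  -- key identity
  have hsum : f (T x) + f (T y) = ‖x + y‖ * f w := by
    have h1 : x + y = ‖x + y‖ • z := (smul_inv_smul₀ hs0.ne' (x + y)).symm
    calc f (T x) + f (T y) = f (T (x + y)) := by rw [map_add, map_add]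
      _ = f (T (‖x + y‖ • z)) := by rw [← h1]
      _ = ‖x + y‖ * f (T z) := by rw [map_smul, map_smul, smul_eq_mul]
      _ = ‖x + y‖ * f w := by rw [hTz]
  -- norm bounds for T
  have hTnorm : ∀ v : X, ‖v‖ ≤ 1 → ‖T v‖ ≤ 1 + η := by
    intro v hv
    calc ‖T v‖ = ‖(T : X →L[ℝ] X) v‖ := rfl
      _ ≤ ‖(T : X →L[ℝ] X)‖ * ‖v‖ := (T : X →L[ℝ] X).le_opNorm v
      _ ≤ (1 + η) * 1 := mul_le_mul hT hv (norm_nonneg _) (by linarith)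
      _ = 1 + η := mul_one _
  have hfT_ub : ∀ v : X, ‖v‖ ≤ 1 → f (T v) ≤ 1 + η := by
    intro v hv
    calc f (T v) ≤ ‖f (T v)‖ := by rw [Real.norm_eq_abs]; exact le_abs_self _
      _ ≤ ‖f‖ * ‖T v‖ := f.le_opNorm _
      _ ≤ 1 * (1 + η) := mul_le_mul hf.le (hTnorm v hv) (norm_nonneg _) zero_le_one
      _ = 1 + η := one_mul _
  have hslow : 2 * (1 - δ) * (1 - δ) ≤ ‖x + y‖ * f w := by
    have h2 : 2 * (1 - δ) ≤ ‖x + y‖ := by linarith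
    exact mul_le_mul h2 hfw (by linarith) (norm_nonneg _)
  -- lower bounds on f (T x), f (T y)
  have hlow : ∀ v : X, f (T v) ≤ 1 + η → α * (1 + η) ≤ ‖x + y‖ * f w - f (T v) := by
    intro v hv
    exact stmt_13_aux1 α η δ _ _ hα0 hα1 hδdef hkey hslow hv
  have hfTy : α * (1 + η) ≤ f (T y) := by
    have := hlow x (hfT_ub x hx); linarith [hsum]
  have hfTx : α * (1 + η) ≤ f (T x) := by
    have := hlow y (hfT_ub y hy); linarith [hsum]
  -- membership in the slice
  set x' : X := (1 + η)⁻¹ • T x with hx'def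
  set y' : X := (1 + η)⁻¹ • T y with hy'def
  have hmem : ∀ (v : X), ‖v‖ ≤ 1 → α * (1 + η) ≤ f (T v) →
      ((1 + η)⁻¹ • T v) ∈ {p : X | ‖p‖ ≤ 1 ∧ α ≤ f p} := by
    intro v hv hfv
    constructor
    · rw [norm_smul, norm_inv, Real.norm_eq_abs, abs_of_pos h1η,
        inv_mul_le_iff₀ h1η, mul_one]
      exact hTnorm v hv
    · show α ≤ f ((1 + η)⁻¹ • T v)
      rw [map_smul, smul_eq_mul]
      calc α = (1 + η)⁻¹ * (α * (1 + η)) := by field_simp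
        _ ≤ (1 + η)⁻¹ * f (T v) := by
            exact mul_le_mul_of_nonneg_left hfv (by positivity)
  have hx' : x' ∈ {p : X | ‖p‖ ≤ 1 ∧ α ≤ f p} := hmem x hx hfTx
  have hy' : y' ∈ {p : X | ‖p‖ ≤ 1 ∧ α ≤ f p} := hmem y hy hfTy
  -- the slice is bounded
  have hbdd : Bornology.IsBounded {p : X | ‖p‖ ≤ 1 ∧ α ≤ f p} := by
    refine (Metric.isBounded_closedBall (x := (0:X)) (r := 1)).subset ?_
    intro v hv
    simpa [Metric.mem_closedBall, dist_zero_right] using hv.1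
  have hd : dist x' y' ≤ Metric.diam {p : X | ‖p‖ ≤ 1 ∧ α ≤ f p} :=
    Metric.dist_le_diam_of_mem hbdd hx' hy'
  have hxy' : ‖x' - y'‖ < ε / 4 := by rw [← dist_eq_norm]; linarith
  have hTxy : ‖T x - T y‖ < (1 + η) * (ε / 4) := by
    have heq : T x - T y = (1 + η) • (x' - y') := by
      rw [hx'def, hy'def, smul_sub, smul_smul, smul_smul,
        mul_inv_cancel₀ h1η.ne', one_smul, one_smul]
    rw [heq, norm_smul, Real.norm_eq_abs, abs_of_pos h1η]
    exact mul_lt_mul_of_pos_left hxy' h1η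
  have hfinal : ‖x - y‖ < ε := by
    have h1 : x - y = T.symm (T x - T y) := by simp [map_sub]
    have h2 : ‖T.symm (T x - T y)‖ ≤ (1 + η) * ‖T x - T y‖ := by
      calc ‖T.symm (T x - T y)‖ = ‖(T.symm : X →L[ℝ] X) (T x - T y)‖ := rfl
        _ ≤ ‖(T.symm : X →L[ℝ] X)‖ * ‖T x - T y‖ :=
            (T.symm : X →L[ℝ] X).le_opNorm _
        _ ≤ (1 + η) * ‖T x - T y‖ :=
            mul_le_mul_of_nonneg_right hTs (norm_nonneg _)
    rw [h1]
    exact lt_of_le_of_lt (le_refl _) (stmt_13_aux2 η ε _ _ hη0 hηhalf hε h2 hTxy (norm_nonneg _))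
  linarith
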